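/- For the generalized Cantor construction with qₙ ≥ δ > 0, the circle C_k^i of radius (1+δ)/2·|I_k^1| centered at the midpoint of I_k^i is disjoint from each circle C_{k+1}^j of radius (1+δ)/2·|I_{k+1}^1| centered at midpoints of level-(k+1) intervals. -/

import Mathlib

/-- Replace a closed interval (given by its endpoints) by its two closed
subintervals remaining after removing a centrally located open interval of
proportion `qk` of its length. -/
noncomputable def cantorChildren (qk : ℝ) (I : ℝ × ℝ) : List (ℝ × ℝ) :=
  [(I.1, I.1 + (1 - qk) * (I.2 - I.1) / 2), (I.2 - (1 - qk) * (I.2 - I.1) / 2, I.2)]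

/-- The list of the `2 ^ k` closed intervals (given by their endpoints) at step
`k` of the generalized Cantor construction for the sequence `ω = (qₙ)`
(indexed so that step `k` removes proportion `q k`). -/
noncomputable def cantorLevel (q : ℕ → ℝ) : ℕ → List (ℝ × ℝ)
  | 0 => [(0, 1)]
  | k + 1 => (cantorLevel q k).flatMap (cantorChildren (q (k + 1)))

/-- The common length of the level-`k` intervals of the generalized Cantor
construction. -/
noncomputable def cantorLength (q : ℕ → ℝ) (k : ℕ) : ℝ :=
  (1 / 2 : ℝ) ^ k * ∏ j ∈ Finset.Icc 1 k, (1 - q j)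

/-- The circle in `ℂ` of radius `(1+δ)/2` times the common level-`k` interval
length, centered at the midpoint of a level-`k` interval `I`. -/
noncomputable def cantorCircle (q : ℕ → ℝ) (δ : ℝ) (k : ℕ) (I : ℝ × ℝ) : Set ℂ :=
  Metric.sphere (((I.1 + I.2) / 2 : ℝ) : ℂ) ((1 + δ) / 2 * cantorLength q k)

lemma cantorLength_pos {q : ℕ → ℝ} (hq : ∀ n, q n < 1) (k : ℕ) :
    0 < cantorLength q k := by
  unfold cantorLength
  apply mul_pos (by positivity)
  exact Finset.prod_pos fun j _ => by linarith [hq j]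

lemma cantorLength_succ (q : ℕ → ℝ) (k : ℕ) :
    cantorLength q (k + 1) = (1 - q (k + 1)) / 2 * cantorLength q k := by
  unfold cantorLength
  rw [Finset.prod_Icc_succ_top (by omega : 1 ≤ k + 1)]
  ring

lemma child_facts {qk Lk : ℝ} (h0 : 0 ≤ qk) (hL : 0 < Lk) {I J : ℝ × ℝ}
    (hI : I.2 = I.1 + Lk) (hJ : J ∈ cantorChildren qk I) :
    J.2 = J.1 + (1 - qk) / 2 * Lk ∧ I.1 ≤ J.1 ∧ J.2 ≤ I.2 := by
  simp only [cantorChildren, List.mem_cons, List.not_mem_nil, or_false] at hJ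
  rcases hJ with rfl | rfl
  · exact ⟨by dsimp only; rw [hI]; ring, le_refl _, by dsimp only; rw [hI]; nlinarith⟩
  · exact ⟨by dsimp only; rw [hI]; ring, by dsimp only; rw [hI]; nlinarith, le_refl _⟩

lemma cantorLevel_len {q : ℕ → ℝ} (hq : ∀ n, 0 ≤ q n ∧ q n < 1) :
    ∀ k, ∀ I ∈ cantorLevel q k, I.2 = I.1 + cantorLength q k
  | 0 => by
    intro I hI
    simp only [cantorLevel, List.mem_singleton] at hI
    subst hI
    simp [cantorLength]
  | k + 1 => by
    intro J hJ
    rw [cantorLevel] at hJ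
    rcases List.mem_flatMap.mp hJ with ⟨I, hI, hc⟩
    have h := cantorLevel_len hq k I hI
    rw [cantorLength_succ]
    exact (child_facts (hq (k + 1)).1 (cantorLength_pos (fun n => (hq n).2) k) h hc).1

lemma cantorLevel_sep {q : ℕ → ℝ} {δ : ℝ} (hδ : 0 < δ)
    (hq : ∀ n, δ ≤ q n ∧ q n < 1) :
    ∀ k, (cantorLevel q k).Pairwise (fun I J => I.2 + δ * cantorLength q k ≤ J.1)
  | 0 => by simp [cantorLevel]
  | k + 1 => by
    have hq0 : ∀ n, 0 ≤ q n ∧ q n < 1 := fun n => ⟨le_trans hδ.le (hq n).1, (hq n).2⟩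
    have hL := cantorLength_pos (fun n => (hq n).2) k
    have hlen := cantorLevel_len hq0 k
    have hq1 := (hq (k + 1)).1
    have hq2 := (hq (k + 1)).2
    rw [cantorLevel, List.pairwise_flatMap]
    constructor
    · intro I hI
      have h := hlen I hI
      simp only [cantorChildren, List.pairwise_cons, List.mem_singleton,
        List.not_mem_nil, false_implies, implies_true, and_true, List.Pairwise.nil,
        forall_eq]
      rw [cantorLength_succ, h]
      nlinarith [mul_le_mul_of_nonneg_right hq1 hL.le,
        mul_nonneg (mul_nonneg hδ.le (le_trans hδ.le hq1)) hL.le]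
    · refine (cantorLevel_sep hδ hq k).imp_of_mem ?_
      intro I I' hI hI' hrel x hx y hy
      obtain ⟨hx2, hx1, hx3⟩ := child_facts (hq0 (k + 1)).1 hL (hlen I hI) hx
      obtain ⟨hy2, hy1, hy3⟩ := child_facts (hq0 (k + 1)).1 hL (hlen I' hI') hy
      rw [cantorLength_succ]
      have key : δ * ((1 - q (k + 1)) / 2 * cantorLength q k) ≤ δ * cantorLength q k := by
        apply mul_le_mul_of_nonneg_left _ hδ.le
        nlinarith
      linarith

lemma sphere_disjoint_aux {c₁ c₂ : ℂ} {r₁ r₂ : ℝ}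
    (h : dist c₁ c₂ < r₁ - r₂ ∨ r₁ + r₂ < dist c₁ c₂) :
    Disjoint (Metric.sphere c₁ r₁) (Metric.sphere c₂ r₂) := by
  rw [Set.disjoint_left]
  intro x h1 h2
  rw [Metric.mem_sphere] at h1 h2
  have t1 := dist_triangle x c₂ c₁
  have t2 := dist_triangle c₁ x c₂
  rw [dist_comm c₂ c₁] at t1
  rw [dist_comm c₁ x] at t2
  rcases h with h | h <;> linarith

lemma dist_coe_real (x y : ℝ) : dist ((x : ℝ) : ℂ) ((y : ℝ) : ℂ) = |x - y| := by
  rw [Complex.dist_eq, ← Complex.ofReal_sub, Complex.norm_real, Real.norm_eq_abs]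

theorem stmt_10 (q : ℕ → ℝ) (δ : ℝ) (hδ : 0 < δ)
    (hq : ∀ n, δ ≤ q n ∧ q n < 1) (k : ℕ) :
    ∀ I ∈ cantorLevel q k, ∀ J ∈ cantorLevel q (k + 1),
      Disjoint (cantorCircle q δ k I) (cantorCircle q δ (k + 1) J) := by
  intro I hI J hJ
  have hq0 : ∀ n, 0 ≤ q n ∧ q n < 1 := fun n => ⟨le_trans hδ.le (hq n).1, (hq n).2⟩
  have hq1 : ∀ n, q n < 1 := fun n => (hq n).2
  have hL := cantorLength_pos hq1 k
  have hL' := cantorLength_pos hq1 (k + 1)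
  have hlenI := cantorLevel_len hq0 k I hI
  rw [cantorLevel] at hJ
  rcases List.mem_flatMap.mp hJ with ⟨I', hI', hc⟩
  have hlenI' := cantorLevel_len hq0 k I' hI'
  obtain ⟨hJ2, hJ1, hJ3⟩ := child_facts (hq0 (k + 1)).1 hL hlenI' hc
  have hqa := (hq (k + 1)).1
  have hqb := (hq (k + 1)).2
  have hLsucc := cantorLength_succ q k
  have key2 : cantorLength q (k + 1) < cantorLength q k := by
    nlinarith [mul_pos (lt_of_lt_of_le hδ hqa) hL]
  have key3 := mul_pos hδ (sub_pos.mpr key2)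
  apply sphere_disjoint_aux
  rw [dist_coe_real]
  by_cases hII : I' = I
  · subst hII
    left
    rw [abs_lt]
    constructor <;> nlinarith [key3]
  · right
    have hsym : Symmetric (fun A B : ℝ × ℝ =>
        A.2 + δ * cantorLength q k ≤ B.1 ∨ B.2 + δ * cantorLength q k ≤ A.1) :=
      fun A B h => h.symm
    haveI : Std.Symm (fun A B : ℝ × ℝ =>
        A.2 + δ * cantorLength q k ≤ B.1 ∨ B.2 + δ * cantorLength q k ≤ A.1) :=
      ⟨fun a b h => hsym h⟩
    have hsep := ((cantorLevel_sep hδ hq k).imp (S := fun A B : ℝ × ℝ =>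
        A.2 + δ * cantorLength q k ≤ B.1 ∨ B.2 + δ * cantorLength q k ≤ A.1)
        (fun h => Or.inl h)).forall
      hI hI' (fun h => hII h.symm)
    rcases hsep with h | h
    · rw [abs_sub_comm]
      apply lt_of_lt_of_le _ (le_abs_self _)
      nlinarith [key3]
    · apply lt_of_lt_of_le _ (le_abs_self _)
      nlinarith [key3]
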